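/- Let n : ℕ, ι an index type, and p, q : ι → (n-qubit Pauli indices). For each i, set A i = P (p i) ⊗ₖ (P (q i)).map star. Then all the A i mutually commute, i.e. A i * A j = A j * A i for all i, j, if and only if for all pairs i, j either both left and right factors anticommute, i.e. P (p i) * P (p j) = -(P (p j) * P (p i)) and P (q i) * P (q j) = -(P (q j) * P (q i)), or both left and right factors commute, i.e. P (p i) * P (p j) = P (p j) * P (p i) and P (q i) * P (q j) = P (q j) * P (q i). -/

import Mathlib

open Kronecker Matrix

/-- An `n`-qubit Pauli index: a pair `(a_z, a_x)` of bit strings. -/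
abbrev PauliIdx (n : ℕ) := (Fin n → ZMod 2) × (Fin n → ZMod 2)

/-- The `n`-qubit Pauli string associated with a Pauli index. -/
def P {n : ℕ} (a : PauliIdx n) :
    Matrix (Fin n → ZMod 2) (Fin n → ZMod 2) ℂ :=
  Matrix.of fun i j => ∏ t : Fin n,
    ((if a.1 t * i t = 1 then (-1 : ℂ) else 1) * (if i t = j t + a.2 t then 1 else 0))

namespace PauliAux

def e (c : ZMod 2) : ℂ := if c = 1 then -1 else 1

lemma zmod2_cases (c : ZMod 2) : c = 0 ∨ c = 1 := by revert c; decide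

lemma e_ne_zero (c : ZMod 2) : e c ≠ 0 := by unfold e; split <;> norm_num

lemma e_add (c d : ZMod 2) : e (c + d) = e c * e d := by
  rcases zmod2_cases c with h | h <;> rcases zmod2_cases d with h' | h' <;>
    subst h <;> subst h' <;> simp [e] <;> decide

lemma e_mul_self (c : ZMod 2) : e c * e c = 1 := by
  unfold e; split <;> norm_num

lemma star_e (c : ZMod 2) : star (e c) = e c := by
  unfold e; split <;> simp

def s {n : ℕ} (z i : Fin n → ZMod 2) : ℂ := ∏ t, e (z t * i t)

lemma s_ne_zero {n : ℕ} (z i : Fin n → ZMod 2) : s z i ≠ 0 :=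
  Finset.prod_ne_zero_iff.mpr fun t _ => e_ne_zero _

lemma s_add {n : ℕ} (z i j : Fin n → ZMod 2) : s z (i + j) = s z i * s z j := by
  simp only [s, ← Finset.prod_mul_distrib]
  exact Finset.prod_congr rfl fun t _ => by
    rw [Pi.add_apply, mul_add, e_add]

lemma s_mul_self {n : ℕ} (z i : Fin n → ZMod 2) : s z i * s z i = 1 := by
  simp only [s, ← Finset.prod_mul_distrib]
  simp [e_mul_self]

lemma star_s {n : ℕ} (z i : Fin n → ZMod 2) : star (s z i) = s z i := by
  rw [s, star_prod]
  exact Finset.prod_congr rfl fun t _ => star_e _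

lemma P_apply {n : ℕ} (a : PauliIdx n) (i j : Fin n → ZMod 2) :
    P a i j = s a.1 i * (if i = j + a.2 then 1 else 0) := by
  rw [P, of_apply, Finset.prod_mul_distrib]
  congr 1
  by_cases h : i = j + a.2
  · subst h; simp
  · obtain ⟨t, ht⟩ := Function.ne_iff.mp h
    rw [if_neg h]
    exact Finset.prod_eq_zero (Finset.mem_univ t) (if_neg ht)


lemma zmod2_add_self (c : ZMod 2) : c + c = 0 := by revert c; decide

lemma add_self_zero {n : ℕ} (x : Fin n → ZMod 2) : x + x = 0 := by
  funext t; exact zmod2_add_self (x t)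

lemma P_mul_apply {n : ℕ} (a b : PauliIdx n) (i j : Fin n → ZMod 2) :
    (P a * P b) i j = s a.1 i * s b.1 (j + b.2) *
      (if i = j + b.2 + a.2 then 1 else 0) := by
  rw [mul_apply]
  rw [Finset.sum_eq_single (j + b.2)]
  · rw [P_apply, P_apply]
    simp [mul_comm, mul_assoc, mul_left_comm]
  · intro k _ hk
    rw [P_apply b, if_neg hk, mul_zero, mul_zero]
  · simp

lemma P_map_star {n : ℕ} (a : PauliIdx n) : (P a).map star = P a := by
  ext i j
  rw [map_apply, P_apply, star_mul', star_s]
  congr 1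
  split <;> simp

lemma P_mul_smul {n : ℕ} (a b : PauliIdx n) :
    P a * P b = (s b.1 a.2 * s a.1 b.2) • (P b * P a) := by
  ext i j
  rw [Matrix.smul_apply, P_mul_apply, P_mul_apply, smul_eq_mul]
  by_cases h : i = j + b.2 + a.2
  · have h2 : i = j + a.2 + b.2 := by rw [h]; ring
    rw [if_pos h, if_pos h2]
    have e1 : j + b.2 = i + a.2 := by rw [h]; rw [add_assoc, add_self_zero, add_zero]
    have e2 : j + a.2 = i + b.2 := by rw [h2, add_assoc, add_self_zero, add_zero]
    rw [e1, e2, s_add, s_add]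
    linear_combination (-(s a.1 i * s b.1 i * s b.1 a.2)) * s_mul_self a.1 b.2
  · have h2 : ¬ i = j + a.2 + b.2 := by rw [show j + a.2 + b.2 = j + b.2 + a.2 by ring]; exact h
    rw [if_neg h, if_neg h2, mul_zero, mul_zero, mul_zero]


noncomputable def eps {n : ℕ} (a b : PauliIdx n) : ℂ := s b.1 a.2 * s a.1 b.2

lemma eps_cases {n : ℕ} (a b : PauliIdx n) : eps a b = 1 ∨ eps a b = -1 := by
  have h : eps a b * eps a b = 1 := by
    have := s_mul_self b.1 a.2
    have := s_mul_self a.1 b.2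
    unfold eps; linear_combination (s a.1 b.2 * s a.1 b.2) * s_mul_self b.1 a.2 +
      s_mul_self a.1 b.2
  exact mul_self_eq_one_iff.mp h

lemma P_mul_ne_zero {n : ℕ} (a b : PauliIdx n) : P a * P b ≠ 0 := by
  intro h
  have := congrFun (congrFun h (b.2 + a.2)) 0
  rw [P_mul_apply] at this
  simp only [zero_add, Matrix.zero_apply, if_true, mul_one] at this
  exact mul_ne_zero (s_ne_zero _ _) (s_ne_zero _ _) this

lemma kron_ne_zero {n : ℕ} (a b c d : PauliIdx n) :
    (P a * P b) ⊗ₖ (P c * P d) ≠ 0 := by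
  intro h
  have := congrFun (congrFun h (b.2 + a.2, d.2 + c.2)) (0, 0)
  rw [kroneckerMap_apply, P_mul_apply, P_mul_apply] at this
  simp only [zero_add, Matrix.zero_apply, if_true, mul_one] at this
  exact mul_ne_zero (mul_ne_zero (s_ne_zero _ _) (s_ne_zero _ _))
    (mul_ne_zero (s_ne_zero _ _) (s_ne_zero _ _)) this

end PauliAux

open PauliAux

/-- Necessary and sufficient condition for mutual commutation of the transfer
matrices `P (p i) ⊗ₖ (P (q i)).map star`: for every pair, either both left and
right factors anticommute, or both left and right factors commute. -/
theorem transfer_matrices_commute_iff {n : ℕ} {ι : Type*}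
    (p q : ι → PauliIdx n) :
    (∀ i j : ι,
        (P (p i) ⊗ₖ (P (q i)).map star) * (P (p j) ⊗ₖ (P (q j)).map star) =
          (P (p j) ⊗ₖ (P (q j)).map star) * (P (p i) ⊗ₖ (P (q i)).map star)) ↔
      (∀ i j : ι,
        (P (p i) * P (p j) = -(P (p j) * P (p i)) ∧
          P (q i) * P (q j) = -(P (q j) * P (q i))) ∨
        (P (p i) * P (p j) = P (p j) * P (p i) ∧
          P (q i) * P (q j) = P (q j) * P (q i))) := by
  simp only [P_map_star]
  constructor
  · intro h i j
    have H := h i j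
    rw [← mul_kronecker_mul, ← mul_kronecker_mul, P_mul_smul (p i) (p j),
      P_mul_smul (q i) (q j), smul_kronecker, kronecker_smul, smul_smul,
      show s (p j).1 (p i).2 * s (p i).1 (p j).2 = eps (p i) (p j) from rfl,
      show s (q j).1 (q i).2 * s (q i).1 (q j).2 = eps (q i) (q j) from rfl] at H
    have hz := kron_ne_zero (p j) (p i) (q j) (q i)
    have hc : eps (p i) (p j) * eps (q i) (q j) = 1 := by
      by_contra hc
      have : (eps (p i) (p j) * eps (q i) (q j) - 1) •
          ((P (p j) * P (p i)) ⊗ₖ (P (q j) * P (q i))) = 0 := by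
        rw [sub_smul, one_smul, H, sub_self]
      rcases smul_eq_zero.mp this with h' | h'
      · exact hc (sub_eq_zero.mp h')
      · exact hz h'
    rcases eps_cases (p i) (p j) with h1 | h1 <;> rcases eps_cases (q i) (q j) with h2 | h2
    · right
      constructor
      · rw [P_mul_smul (p i) (p j), show s (p j).1 (p i).2 * s (p i).1 (p j).2 = eps (p i) (p j) from rfl, h1, one_smul]
      · rw [P_mul_smul (q i) (q j), show s (q j).1 (q i).2 * s (q i).1 (q j).2 = eps (q i) (q j) from rfl, h2, one_smul]
    · exfalso; rw [h1, h2] at hc; norm_num at hc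
    · exfalso; rw [h1, h2] at hc; norm_num at hc
    · left
      constructor
      · rw [P_mul_smul (p i) (p j), show s (p j).1 (p i).2 * s (p i).1 (p j).2 = eps (p i) (p j) from rfl, h1, neg_one_smul]
      · rw [P_mul_smul (q i) (q j), show s (q j).1 (q i).2 * s (q i).1 (q j).2 = eps (q i) (q j) from rfl, h2, neg_one_smul]
  · intro h i j
    rw [← mul_kronecker_mul, ← mul_kronecker_mul]
    rcases h i j with ⟨h1, h2⟩ | ⟨h1, h2⟩
    · rw [h1, h2]
      rw [show -(P (p j) * P (p i)) = (-1 : ℂ) • (P (p j) * P (p i)) by simp,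
        show -(P (q j) * P (q i)) = (-1 : ℂ) • (P (q j) * P (q i)) by simp,
        smul_kronecker, kronecker_smul, smul_smul]
      norm_num
    · rw [h1, h2]
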